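/- Let F₁, F₂ ∈ ℂ^{p×q} with α := ‖F₁‖₂ > 0 and β := ‖F₂‖₂ > 0, and define g(γ) := ‖[γF₁ γ⁻¹F₂]‖₂² (the squared spectral norm of the block row matrix) for γ > 0. Then inf over γ > 0 of g(γ) ≤ 2αβ, and for every γ > 0 with γ < √(β/(2α)) or γ > √(2β/α) one has g(γ) > 2αβ. Consequently, every γ* > 0 attaining the infimum of g lies in the closed interval [√(β/(2α)), √(2β/α)], and g evaluated at the geometric mean γ^{gm} := √(β/α) is an upper bound for the infimum. -/

import Mathlib

open Matrix

/-- The spectral norm (largest singular value) of a complex matrix. -/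
noncomputable def spNorm {k l : Type*} [Fintype k] [Fintype l] [DecidableEq k] [DecidableEq l]
    (A : Matrix k l ℂ) : ℝ :=
  ‖(Matrix.toEuclideanLin A).toContinuousLinearMap‖

lemma spNorm_nonneg {k l : Type*} [Fintype k] [Fintype l] [DecidableEq k] [DecidableEq l]
    (A : Matrix k l ℂ) : 0 ≤ spNorm A := norm_nonneg _

lemma spNorm_smul_real {k l : Type*} [Fintype k] [Fintype l] [DecidableEq k] [DecidableEq l]
    (c : ℝ) (A : Matrix k l ℂ) : spNorm (c • A) = |c| * spNorm A := by
  have h : c • A = (c : ℂ) • A := by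
    ext i j
    simp [Matrix.smul_apply, Complex.real_smul]
  rw [h]
  unfold spNorm
  rw [LinearEquiv.map_smul, LinearEquiv.map_smul, norm_smul, Complex.norm_real,
    Real.norm_eq_abs]

lemma eu_sq {κ : Type*} [Fintype κ] (w : EuclideanSpace ℂ κ) :
    ‖w‖ ^ 2 = ∑ i, ‖w i‖ ^ 2 := by
  rw [EuclideanSpace.norm_eq, Real.sq_sqrt (by positivity)]

lemma euclid_sum_norm_sq {n₁ n₂ : Type*} [Fintype n₁] [Fintype n₂]
    (z : EuclideanSpace ℂ (n₁ ⊕ n₂)) (x : EuclideanSpace ℂ n₁) (y : EuclideanSpace ℂ n₂)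
    (hx : ∀ i, z (Sum.inl i) = x i) (hy : ∀ i, z (Sum.inr i) = y i) :
    ‖z‖ ^ 2 = ‖x‖ ^ 2 + ‖y‖ ^ 2 := by
  rw [eu_sq, eu_sq, eu_sq, Fintype.sum_sum_type]
  simp [hx, hy]

lemma toEuclideanLin_fromColumns {m n₁ n₂ : Type*} [Fintype m] [Fintype n₁] [Fintype n₂]
    [DecidableEq m] [DecidableEq n₁] [DecidableEq n₂]
    (A : Matrix m n₁ ℂ) (B : Matrix m n₂ ℂ) (x : EuclideanSpace ℂ n₁) (y : EuclideanSpace ℂ n₂)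
    (z : EuclideanSpace ℂ (n₁ ⊕ n₂))
    (hx : ∀ i, z (Sum.inl i) = x i) (hy : ∀ i, z (Sum.inr i) = y i) :
    Matrix.toEuclideanLin (fromCols A B) z
      = Matrix.toEuclideanLin A x + Matrix.toEuclideanLin B y := by
  rw [Matrix.toEuclideanLin_apply, Matrix.toEuclideanLin_apply, Matrix.toEuclideanLin_apply]
  have hzz : WithLp.ofLp z = Sum.elim (WithLp.ofLp x) (WithLp.ofLp y) := by
    funext i
    cases i with
    | inl i => exact hx i
    | inr i => exact hy i
  rw [hzz, fromCols_mulVec_sumElim]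
  rfl

lemma spNorm_left_le {m n₁ n₂ : Type*} [Fintype m] [Fintype n₁] [Fintype n₂]
    [DecidableEq m] [DecidableEq n₁] [DecidableEq n₂]
    (A : Matrix m n₁ ℂ) (B : Matrix m n₂ ℂ) :
    spNorm A ≤ spNorm (fromCols A B) := by
  apply ContinuousLinearMap.opNorm_le_bound _ (spNorm_nonneg _)
  intro x
  set z : EuclideanSpace ℂ (n₁ ⊕ n₂) := WithLp.toLp 2 (Sum.elim (WithLp.ofLp x) 0) with hzdef
  have hx : ∀ i, z (Sum.inl i) = x i := fun i => rfl
  have hy : ∀ i, z (Sum.inr i) = (0 : EuclideanSpace ℂ n₂) i := fun i => rfl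
  have hz : ‖z‖ = ‖x‖ := by
    have h2 : ‖z‖ ^ 2 = ‖x‖ ^ 2 := by
      rw [euclid_sum_norm_sq z x 0 hx hy, norm_zero]; ring
    calc ‖z‖ = Real.sqrt (‖z‖ ^ 2) := (Real.sqrt_sq (norm_nonneg _)).symm
      _ = Real.sqrt (‖x‖ ^ 2) := by rw [h2]
      _ = ‖x‖ := Real.sqrt_sq (norm_nonneg _)
  have happ : (Matrix.toEuclideanLin A).toContinuousLinearMap x
      = (Matrix.toEuclideanLin (fromCols A B)).toContinuousLinearMap z := by
    show Matrix.toEuclideanLin A x = Matrix.toEuclideanLin (fromCols A B) z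
    rw [toEuclideanLin_fromColumns A B x 0 z hx hy, map_zero, add_zero]
  rw [happ, ← hz]
  exact (Matrix.toEuclideanLin (fromCols A B)).toContinuousLinearMap.le_opNorm z

lemma spNorm_right_le {m n₁ n₂ : Type*} [Fintype m] [Fintype n₁] [Fintype n₂]
    [DecidableEq m] [DecidableEq n₁] [DecidableEq n₂]
    (A : Matrix m n₁ ℂ) (B : Matrix m n₂ ℂ) :
    spNorm B ≤ spNorm (fromCols A B) := by
  apply ContinuousLinearMap.opNorm_le_bound _ (spNorm_nonneg _)
  intro y
  set z : EuclideanSpace ℂ (n₁ ⊕ n₂) := WithLp.toLp 2 (Sum.elim 0 (WithLp.ofLp y)) with hzdef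
  have hx : ∀ i, z (Sum.inl i) = (0 : EuclideanSpace ℂ n₁) i := fun i => rfl
  have hy : ∀ i, z (Sum.inr i) = y i := fun i => rfl
  have hz : ‖z‖ = ‖y‖ := by
    have h2 : ‖z‖ ^ 2 = ‖y‖ ^ 2 := by
      rw [euclid_sum_norm_sq z 0 y hx hy, norm_zero]; ring
    calc ‖z‖ = Real.sqrt (‖z‖ ^ 2) := (Real.sqrt_sq (norm_nonneg _)).symm
      _ = Real.sqrt (‖y‖ ^ 2) := by rw [h2]
      _ = ‖y‖ := Real.sqrt_sq (norm_nonneg _)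
  have happ : (Matrix.toEuclideanLin B).toContinuousLinearMap y
      = (Matrix.toEuclideanLin (fromCols A B)).toContinuousLinearMap z := by
    show Matrix.toEuclideanLin B y = Matrix.toEuclideanLin (fromCols A B) z
    rw [toEuclideanLin_fromColumns A B 0 y z hx hy, map_zero, zero_add]
  rw [happ, ← hz]
  exact (Matrix.toEuclideanLin (fromCols A B)).toContinuousLinearMap.le_opNorm z

lemma spNorm_fromColumns_le {m n₁ n₂ : Type*} [Fintype m] [Fintype n₁] [Fintype n₂]
    [DecidableEq m] [DecidableEq n₁] [DecidableEq n₂]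
    (A : Matrix m n₁ ℂ) (B : Matrix m n₂ ℂ) :
    spNorm (fromCols A B) ≤ Real.sqrt (spNorm A ^ 2 + spNorm B ^ 2) := by
  apply ContinuousLinearMap.opNorm_le_bound _ (Real.sqrt_nonneg _)
  intro z
  set x : EuclideanSpace ℂ n₁ := WithLp.toLp 2 (fun i => z (Sum.inl i)) with hxd
  set y : EuclideanSpace ℂ n₂ := WithLp.toLp 2 (fun i => z (Sum.inr i)) with hyd
  have hx : ∀ i, z (Sum.inl i) = x i := fun i => rfl
  have hy : ∀ i, z (Sum.inr i) = y i := fun i => rfl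
  have happ : (Matrix.toEuclideanLin (fromCols A B)).toContinuousLinearMap z
      = (Matrix.toEuclideanLin A).toContinuousLinearMap x
        + (Matrix.toEuclideanLin B).toContinuousLinearMap y := by
    show Matrix.toEuclideanLin (fromCols A B) z
      = Matrix.toEuclideanLin A x + Matrix.toEuclideanLin B y
    exact toEuclideanLin_fromColumns A B x y z hx hy
  have hzn : ‖z‖ ^ 2 = ‖x‖ ^ 2 + ‖y‖ ^ 2 := euclid_sum_norm_sq z x y hx hy
  rw [happ]
  have h1 : ‖(Matrix.toEuclideanLin A).toContinuousLinearMap x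
        + (Matrix.toEuclideanLin B).toContinuousLinearMap y‖
      ≤ spNorm A * ‖x‖ + spNorm B * ‖y‖ :=
    (norm_add_le _ _).trans (add_le_add
      ((Matrix.toEuclideanLin A).toContinuousLinearMap.le_opNorm x)
      ((Matrix.toEuclideanLin B).toContinuousLinearMap.le_opNorm y))
  refine h1.trans ?_
  have hcs : (spNorm A * ‖x‖ + spNorm B * ‖y‖) ^ 2
      ≤ (spNorm A ^ 2 + spNorm B ^ 2) * (‖x‖ ^ 2 + ‖y‖ ^ 2) := by
    nlinarith [sq_nonneg (spNorm A * ‖y‖ - spNorm B * ‖x‖)]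
  have hn1 : 0 ≤ spNorm A * ‖x‖ + spNorm B * ‖y‖ :=
    add_nonneg (mul_nonneg (spNorm_nonneg _) (norm_nonneg _))
      (mul_nonneg (spNorm_nonneg _) (norm_nonneg _))
  have := Real.sqrt_le_sqrt hcs
  rw [Real.sqrt_sq hn1] at this
  refine this.trans ?_
  rw [Real.sqrt_mul (by nlinarith [sq_nonneg (spNorm A), sq_nonneg (spNorm B)]), ← hzn, Real.sqrt_sq (norm_nonneg _)]

/-- for `g(γ) = ‖[γF₁ γ⁻¹F₂]‖₂²` with `α = ‖F₁‖₂ > 0`, `β = ‖F₂‖₂ > 0`: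
the infimum of `g` over `(0,∞)` is at most `2αβ`, `g(γ) > 2αβ` for `γ < √(β/(2α))` or
`γ > √(2β/α)`, so every minimizer lies in `[√(β/(2α)), √(2β/α)]`, and `g(√(β/α))` is an
upper bound for the infimum. -/
theorem stmt18 {p q : ℕ} (F₁ F₂ : Matrix (Fin p) (Fin q) ℂ)
    (α β : ℝ) (hα : α = spNorm F₁) (hβ : β = spNorm F₂)
    (hα0 : 0 < α) (hβ0 : 0 < β)
    (g : ℝ → ℝ)
    (hg : ∀ γ : ℝ, g γ = spNorm (fromCols (γ • F₁) (γ⁻¹ • F₂)) ^ 2) :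
    ((⨅ γ : {γ : ℝ // 0 < γ}, g (γ : ℝ)) ≤ 2 * α * β)
    ∧ (∀ γ : ℝ, 0 < γ →
        (γ < Real.sqrt (β / (2 * α)) ∨ Real.sqrt (2 * β / α) < γ) → 2 * α * β < g γ)
    ∧ (∀ γs : ℝ, 0 < γs → (∀ γ : ℝ, 0 < γ → g γs ≤ g γ) →
        γs ∈ Set.Icc (Real.sqrt (β / (2 * α))) (Real.sqrt (2 * β / α)))
    ∧ ((⨅ γ : {γ : ℝ // 0 < γ}, g (γ : ℝ)) ≤ g (Real.sqrt (β / α))) := by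
  have key : ∀ γ : ℝ, 0 < γ →
      (γ ^ 2 * α ^ 2 ≤ g γ ∧ γ⁻¹ ^ 2 * β ^ 2 ≤ g γ
        ∧ g γ ≤ γ ^ 2 * α ^ 2 + γ⁻¹ ^ 2 * β ^ 2) := by
    intro γ hγ
    rw [hg]
    have e1 : spNorm (γ • F₁) = γ * α := by
      rw [spNorm_smul_real, abs_of_pos hγ, hα]
    have e2 : spNorm (γ⁻¹ • F₂) = γ⁻¹ * β := by
      rw [spNorm_smul_real, abs_of_pos (inv_pos.mpr hγ), hβ]
    refine ⟨?_, ?_, ?_⟩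
    · have h := pow_le_pow_left₀ (spNorm_nonneg _) (spNorm_left_le (γ • F₁) (γ⁻¹ • F₂)) 2
      rw [e1, mul_pow] at h
      exact h
    · have h := pow_le_pow_left₀ (spNorm_nonneg _) (spNorm_right_le (γ • F₁) (γ⁻¹ • F₂)) 2
      rw [e2, mul_pow] at h
      exact h
    · have h := pow_le_pow_left₀ (spNorm_nonneg _) (spNorm_fromColumns_le (γ • F₁) (γ⁻¹ • F₂)) 2
      rw [e1, e2] at h
      rw [Real.sq_sqrt (add_nonneg (sq_nonneg _) (sq_nonneg _)), mul_pow, mul_pow] at h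
      exact h
  set γgm : ℝ := Real.sqrt (β / α) with hγgmdef
  have hγgm : 0 < γgm := Real.sqrt_pos.mpr (div_pos hβ0 hα0)
  have hsq : γgm ^ 2 = β / α := Real.sq_sqrt (div_pos hβ0 hα0).le
  have hub : g γgm ≤ 2 * α * β := by
    refine (key γgm hγgm).2.2.trans (le_of_eq ?_)
    rw [inv_pow, hsq]
    field_simp
    ring
  have hbdd : BddBelow (Set.range fun γ : {γ : ℝ // 0 < γ} => g (γ : ℝ)) := by
    refine ⟨0, ?_⟩
    rintro _ ⟨γ, rfl⟩
    show (0:ℝ) ≤ g γ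
    rw [hg]
    positivity
  have hinf : (⨅ γ : {γ : ℝ // 0 < γ}, g (γ : ℝ)) ≤ g γgm :=
    ciInf_le hbdd ⟨γgm, hγgm⟩
  have part2 : ∀ γ : ℝ, 0 < γ →
      (γ < Real.sqrt (β / (2 * α)) ∨ Real.sqrt (2 * β / α) < γ) → 2 * α * β < g γ := by
    intro γ hγ hcase
    rcases hcase with h | h
    · have h2 : γ ^ 2 < β / (2 * α) := (Real.lt_sqrt hγ.le).mp h
      rw [lt_div_iff₀ (by positivity)] at h2
      have hfin : 2 * α * β < γ⁻¹ ^ 2 * β ^ 2 := by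
        rw [show γ⁻¹ ^ 2 * β ^ 2 = β ^ 2 / γ ^ 2 by field_simp,
          lt_div_iff₀ (by positivity)]
        nlinarith
      exact hfin.trans_le (key γ hγ).2.1
    · have h2 : 2 * β / α < γ ^ 2 := (Real.sqrt_lt' hγ).mp h
      rw [div_lt_iff₀ hα0] at h2
      have hfin : 2 * α * β < γ ^ 2 * α ^ 2 := by nlinarith
      exact hfin.trans_le (key γ hγ).1
  refine ⟨hinf.trans hub, part2, ?_, hinf⟩
  intro γs hγs hmin
  have hle : g γs ≤ 2 * α * β := (hmin γgm hγgm).trans hub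
  constructor
  · by_contra hc
    push_neg at hc
    exact absurd (part2 γs hγs (Or.inl hc)) (not_lt.mpr hle)
  · by_contra hc
    push_neg at hc
    exact absurd (part2 γs hγs (Or.inr hc)) (not_lt.mpr hle)
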